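/- There exists a family ⟨e_α : α → ω | α < ω₁⟩ of functions indexed by the countable ordinals such that: each e_α is finite-to-one (the preimage of every n < ω is finite); the family is coherent, i.e., for all α < β < ω₁ the set {ξ < α : e_β(ξ) ≠ e_α(ξ)} is finite; and the family is nontrivial, i.e., there is no function e : ω₁ → ω such that {ξ < α : e(ξ) ≠ e_α(ξ)} is finite for every α < ω₁. -/

import Mathlib

open Cardinal
open Set in
section

namespace Stmt3
attribute [local instance] Classical.propDecidable

lemma exists_seq {α : Ordinal} (h : Order.IsSuccLimit α) (hc : α < (aleph 1).ord) :
    ∃ s : ℕ → Ordinal, (∀ n, s n < α) ∧ ∀ β < α, ∃ n, β < s n := by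
  have hcnt : (Set.Iio α).Countable := by
    rw [← Cardinal.le_aleph0_iff_set_countable, Ordinal.mk_Iio_ordinal]
    have h1 : α.card < aleph 1 := (Cardinal.lt_ord).1 hc
    have h2 : α.card ≤ aleph 0 := by
      rwa [← Order.lt_succ_iff, ← Cardinal.aleph_succ, Ordinal.succ_zero]
    simpa using Cardinal.lift_le.2 h2
  have hne : (Set.Iio α).Nonempty := ⟨0, h.pos⟩
  obtain ⟨f, hf⟩ := hcnt.exists_eq_range hne
  refine ⟨fun n => f n + 1, fun n => ?_, fun β hβ => ?_⟩
  · have : f n ∈ Set.Iio α := by rw [hf]; exact mem_range_self n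
    exact h.succ_lt this
  · have : β ∈ range f := by rw [← hf]; exact hβ
    obtain ⟨n, hn⟩ := this
    exact ⟨n, by rw [← hn]; exact Order.lt_succ _⟩

def seqcond (α : Ordinal) : Prop := Order.IsSuccLimit α ∧ α < (aleph 1).ord

noncomputable def seq (α : Ordinal) : ℕ → Ordinal :=
  if h : seqcond α then Classical.choose (exists_seq h.1 h.2) else fun _ => 0

lemma seq_lt {α : Ordinal} (h : seqcond α) (n : ℕ) : seq α n < α := by
  rw [seq, dif_pos h]; exact (Classical.choose_spec (exists_seq h.1 h.2)).1 n

lemma lt_seq {α : Ordinal} (h : seqcond α) {β : Ordinal} (hβ : β < α) : ∃ n, β < seq α n := by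
  rw [seq, dif_pos h]; exact (Classical.choose_spec (exists_seq h.1 h.2)).2 β hβ

noncomputable def E (α : Ordinal) : Ordinal → ℕ :=
  if h : seqcond α then
    fun ξ => if hx : ∃ n, ξ < seq α n then
      max (E (seq α (Nat.find hx)) ξ) (Nat.find hx) else 0
  else if h3 : ∃ γ, α = γ + 1 then E (Classical.choose h3)
  else fun _ => 0
termination_by α
decreasing_by
  · exact seq_lt h _
  · conv_rhs => rw [Classical.choose_spec h3]
    exact Order.lt_succ _

lemma E_limit {α : Ordinal} (h : seqcond α) {ξ : Ordinal} (hx : ∃ n, ξ < seq α n) :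
    E α ξ = max (E (seq α (Nat.find hx)) ξ) (Nat.find hx) := by
  rw [E]
  simp only [dif_pos h, dif_pos hx]

lemma E_succ (γ : Ordinal) (h : ¬ seqcond (γ + 1)) : E (γ + 1) = E γ := by
  rw [E]
  have h3 : ∃ γ', γ + 1 = γ' + 1 := ⟨γ, rfl⟩
  rw [dif_neg h, dif_pos h3]
  have h4 : Order.succ γ = Order.succ (Classical.choose h3) := by
    rw [← Ordinal.add_one_eq_succ, ← Ordinal.add_one_eq_succ]; exact Classical.choose_spec h3
  exact congrArg E (Order.succ_injective h4).symm

lemma key : ∀ α : Ordinal, α < (aleph 1).ord →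
    (∀ k : ℕ, {ξ : Ordinal | ξ < α ∧ E α ξ = k}.Finite) ∧
    (∀ β : Ordinal, β < α → {ξ : Ordinal | ξ < β ∧ E α ξ ≠ E β ξ}.Finite) := by
  intro α
  induction α using Ordinal.induction with
  | h α IH =>
  intro hα
  rcases Ordinal.zero_or_succ_or_isSuccLimit α with h0 | ⟨γ, hγ⟩ | hlim
  · subst h0
    constructor
    · intro k
      refine Set.finite_empty.subset ?_
      rintro ξ ⟨hξ, -⟩
      exact absurd hξ (not_lt_zero (a := ξ))
    · intro β hβ
      exact absurd hβ (not_lt_zero (a := β))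
  · -- successor case
    rw [← Ordinal.add_one_eq_succ] at hγ
    subst hγ
    have hnsc : ¬ seqcond (γ + 1) := by
      intro hsc
      exact (Ordinal.add_one_eq_succ γ ▸ Order.not_isSuccLimit_succ γ) hsc.1
    have hE : E (γ + 1) = E γ := E_succ γ hnsc
    have hγlt : γ < γ + 1 := Order.lt_succ γ
    have IHγ := IH γ hγlt (hγlt.trans hα)
    constructor
    · intro k
      refine ((IHγ.1 k).union (Set.finite_singleton γ)).subset ?_
      rintro ξ ⟨hξ, hk⟩
      rw [hE] at hk
      rcases lt_or_eq_of_le (Order.lt_succ_iff.1 (Ordinal.add_one_eq_succ γ ▸ hξ)) with h | h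
      · exact Or.inl ⟨h, hk⟩
      · exact Or.inr (by simp [h])
    · intro β hβ
      rcases lt_or_eq_of_le (Order.lt_succ_iff.1 (Ordinal.add_one_eq_succ γ ▸ hβ)) with h | h
      · refine (IHγ.2 β h).subset ?_
        rintro ξ ⟨hξ, hne⟩
        rw [hE] at hne
        exact ⟨hξ, hne⟩
      · subst h
        refine Set.finite_empty.subset ?_
        rintro ξ ⟨-, hne⟩
        rw [hE] at hne
        exact hne rfl
  · -- limit case
    have hsc : seqcond α := ⟨hlim, hα⟩
    have hfinle : ∀ γ, γ < α → ∀ k : ℕ, {ξ : Ordinal | ξ < γ ∧ E γ ξ ≤ k}.Finite := by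
      intro γ hγ k
      have hfin := (IH γ hγ (hγ.trans hα)).1
      refine (Set.Finite.biUnion (Finset.range (k+1)).finite_toSet
        (fun j _ => hfin j)).subset ?_
      rintro ξ ⟨h1, h2⟩
      exact Set.mem_biUnion (by simpa using Nat.lt_succ_of_le h2) ⟨h1, rfl⟩
    constructor
    · intro k
      refine (Set.Finite.biUnion (Finset.range (k+1)).finite_toSet
        (fun n _ => hfinle (seq α n) (seq_lt hsc n) k)).subset ?_
      rintro ξ ⟨hξα, hEk⟩
      have hx : ∃ n, ξ < seq α n := lt_seq hsc hξα
      rw [E_limit hsc hx] at hEk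
      have hN : ξ < seq α (Nat.find hx) := Nat.find_spec hx
      have h1 : Nat.find hx ≤ k := le_trans (le_max_right _ _) hEk.le
      have h2 : E (seq α (Nat.find hx)) ξ ≤ k := le_trans (le_max_left _ _) hEk.le
      exact Set.mem_biUnion (by simpa using Nat.lt_succ_of_le h1) ⟨hN, h2⟩
    · intro β hβ
      obtain ⟨m, hm⟩ := lt_seq hsc hβ
      set sm := seq α m with hsm
      have hsmα : sm < α := seq_lt hsc m
      have hB : {ξ : Ordinal | ξ < β ∧ E sm ξ ≠ E β ξ}.Finite :=
        (IH sm hsmα (hsmα.trans hα)).2 β hm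
      have hC : {ξ : Ordinal | ξ < sm ∧ E sm ξ ≤ m}.Finite := hfinle sm hsmα m
      have hD : ∀ n : ℕ, {ξ : Ordinal | ξ < seq α n ∧ ξ < β ∧ E (seq α n) ξ ≠ E sm ξ}.Finite := by
        intro n
        rcases lt_trichotomy (seq α n) sm with h | h | h
        · refine ((IH sm hsmα (hsmα.trans hα)).2 (seq α n) h).subset ?_
          rintro ξ ⟨h1, -, h3⟩
          exact ⟨h1, fun hc => h3 hc.symm⟩
        · refine Set.finite_empty.subset ?_
          rintro ξ ⟨-, -, h3⟩
          rw [h] at h3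
          exact h3 rfl
        · refine ((IH (seq α n) (seq_lt hsc n) ((seq_lt hsc n).trans hα)).2 sm h).subset ?_
          rintro ξ ⟨-, h2, h3⟩
          exact ⟨h2.trans hm, h3⟩
      refine (((hB.union hC).union (Set.Finite.biUnion (Finset.range (m+1)).finite_toSet
        (fun n _ => hD n))).subset ?_)
      rintro ξ ⟨hξβ, hne⟩
      have hξα : ξ < α := hξβ.trans (hβ)
      have hξsm : ξ < sm := hξβ.trans hm
      have hx : ∃ n, ξ < seq α n := lt_seq hsc hξα
      set N := Nat.find hx with hNdef
      have hNs : ξ < seq α N := Nat.find_spec hx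
      have hNm : N ≤ m := Nat.find_le (by exact hξsm)
      rw [E_limit hsc hx] at hne
      by_cases hd : E (seq α N) ξ = E sm ξ
      · by_cases hsmall : E sm ξ ≤ m
        · exact Or.inl (Or.inr ⟨hξsm, hsmall⟩)
        · have hmax : max (E (seq α N) ξ) N = E sm ξ := by
            rw [hd]
            exact max_eq_left (hNm.trans (Nat.le_of_not_le hsmall))
          rw [hmax] at hne
          exact Or.inl (Or.inl ⟨hξβ, hne⟩)
      · exact Or.inr (Set.mem_biUnion (by simpa using Nat.lt_succ_of_le hNm) ⟨hNs, hξβ, hd⟩)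

end Stmt3

end

/-- There exists a family `⟨e_α : α → ω | α < ω₁⟩` of functions indexed by
the countable ordinals (here represented as `e : Ordinal → Ordinal → ℕ`, with `e α` of
interest only on `{ξ | ξ < α}`) such that: each `e_α` is finite-to-one; the family is
coherent (for `α < β < ω₁`, `e_β` and `e_α` disagree at only finitely many `ξ < α`); and the
family is nontrivial (no single `e : ω₁ → ω` agrees with each `e_α` modulo finite error). -/
theorem stmt_3 :
    ∃ e : Ordinal → Ordinal → ℕ,
      (∀ α < (aleph 1).ord, ∀ n : ℕ, {ξ : Ordinal | ξ < α ∧ e α ξ = n}.Finite) ∧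
      (∀ α β : Ordinal, α < β → β < (aleph 1).ord →
        {ξ : Ordinal | ξ < α ∧ e β ξ ≠ e α ξ}.Finite) ∧
      ¬ ∃ f : Ordinal → ℕ, ∀ α < (aleph 1).ord,
          {ξ : Ordinal | ξ < α ∧ f ξ ≠ e α ξ}.Finite := by
  refine ⟨Stmt3.E, fun α hα n => (Stmt3.key α hα).1 n,
    fun α β hab hβ => (Stmt3.key β hβ).2 α hab, ?_⟩
  rintro ⟨f, hf⟩
  have hU : ¬ (Set.Iio ((aleph 1).ord)).Countable := by
    rw [← Cardinal.le_aleph0_iff_set_countable, Ordinal.mk_Iio_ordinal,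
      Cardinal.card_ord]
    intro hle
    have := Cardinal.lift_le.1 (hle.trans_eq Cardinal.lift_aleph0.symm)
    exact absurd this (not_le.2 Cardinal.aleph0_lt_aleph_one)
  have hSn : ∃ n : ℕ, {ξ : Ordinal | ξ < (aleph 1).ord ∧ f ξ = n}.Infinite := by
    by_contra h
    push_neg at h
    apply hU
    have hsub : Set.Iio ((aleph 1).ord) ⊆ ⋃ n : ℕ, {ξ : Ordinal | ξ < (aleph 1).ord ∧ f ξ = n} :=
      fun ξ hξ => Set.mem_iUnion.2 ⟨f ξ, hξ, rfl⟩
    exact ((Set.countable_iUnion fun n => (h n).countable).mono hsub)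
  obtain ⟨n, hn⟩ := hSn
  set g := hn.natEmbedding with hg
  have hsup : (⨆ i : ℕ, ((g i : Ordinal))) < (aleph 1).ord := by
    refine Ordinal.iSup_lt_ord_lift (f := fun i : ℕ => ((g i : Ordinal))) ?_ (fun i => (g i).2.1)
    rw [Cardinal.isRegular_aleph_one.cof_eq]
    simpa using Cardinal.aleph0_lt_aleph_one
  set α := (⨆ i : ℕ, ((g i : Ordinal))) + 1 with hαdef
  have hαlt : α < (aleph 1).ord := by
    rw [hαdef, Ordinal.add_one_eq_succ]
    exact (Cardinal.isSuccLimit_ord (Cardinal.aleph0_le_aleph 1)).succ_lt hsup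
  have hg_lt : ∀ i : ℕ, ((g i : Ordinal)) < α := fun i =>
    (Ordinal.le_iSup (fun i : ℕ => ((g i : Ordinal))) i).trans_lt
      (by rw [hαdef]; exact Order.lt_succ _)
  have hfin1 := hf α hαlt
  have hfin2 := (Stmt3.key α hαlt).1 n
  have hinj : Function.Injective (fun i : ℕ => ((g i : Ordinal))) :=
    fun i j hij => g.injective (Subtype.val_injective hij)
  refine Set.infinite_of_injective_forall_mem (s :=
      {ξ : Ordinal | ξ < α ∧ f ξ ≠ Stmt3.E α ξ} ∪ {ξ : Ordinal | ξ < α ∧ Stmt3.E α ξ = n})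
    hinj ?_ (hfin1.union hfin2)
  intro i
  have hfi : f (g i) = n := (g i).2.2
  by_cases hd : f ((g i : Ordinal)) = Stmt3.E α ((g i : Ordinal))
  · exact Or.inr ⟨hg_lt i, by rw [← hd]; exact hfi⟩
  · exact Or.inl ⟨hg_lt i, hd⟩
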